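/- Suppose (N_ν) and (I_ν) are sequences with N_ν → ∞ and N_ν I_ν → ∞. Fix ε > 0. Then Σ_{εN_ν < k ≤ N_ν/2} C(N_ν,k) exp(−(1/2) I_ν (N_ν−k) k) → 0 as ν → ∞. (Almost exact recovery bound: the posterior error Err_z(εN) → 0 when I_T ≫ 1/N.) -/

import Mathlib

open Filter

lemma choose_le_two_pow' (n k : ℕ) (h : k ≤ n) : n.choose k ≤ 2 ^ n := by
  rw [← Nat.sum_range_choose n]
  exact Finset.single_le_sum (fun i _ => Nat.zero_le _)
    (Finset.mem_range.mpr (Nat.lt_succ_of_le h))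

/-- Almost exact recovery bound: if `N_ν → ∞` and `N_ν I_ν → ∞`, then for any fixed
`ε > 0`, `Σ_{εN_ν < k ≤ N_ν/2} C(N_ν,k) exp(−(1/2) I_ν (N_ν−k) k) → 0`. -/
theorem stmt14 (N : ℕ → ℕ) (I : ℕ → ℝ)
    (hN : Tendsto (fun ν => (N ν : ℝ)) atTop atTop)
    (hNI : Tendsto (fun ν => (N ν : ℝ) * I ν) atTop atTop)
    (ε : ℝ) (hε : 0 < ε) :
    Tendsto (fun ν =>
        ∑ k ∈ (Finset.Ioc 0 (N ν / 2)).filter (fun k : ℕ => ε * (N ν : ℝ) < (k : ℝ)),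
          ((N ν).choose k : ℝ) *
            Real.exp (-(1 / 2) * I ν * ((N ν : ℝ) - k) * k))
      atTop (nhds 0) := by
  have hlog : 0 < Real.log 2 := Real.log_pos (by norm_num)
  have hg : Tendsto (fun ν => (N ν : ℝ) * Real.exp (-(N ν : ℝ))) atTop (nhds 0) := by
    have := (Real.tendsto_pow_mul_exp_neg_atTop_nhds_zero 1).comp hN
    simpa [Function.comp_def] using this
  apply squeeze_zero' _ _ hg
  · filter_upwards with ν
    exact Finset.sum_nonneg fun k _ => mul_nonneg (Nat.cast_nonneg _) (Real.exp_pos _).le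
  · have hεNI : Tendsto (fun ν => ε * ((N ν : ℝ) * I ν)) atTop atTop :=
      hNI.const_mul_atTop hε
    filter_upwards [hεNI.eventually_ge_atTop (4 * (Real.log 2 + 1)),
      hN.eventually_ge_atTop 1] with ν hNIν hNν
    set n : ℝ := (N ν : ℝ) with hn
    have hn0 : (0:ℝ) < n := lt_of_lt_of_le one_pos hNν
    have hI0 : 0 ≤ I ν := by
      by_contra h
      push_neg at h
      nlinarith [mul_pos (mul_pos hε hn0) (neg_pos.mpr h)]
    have hterm : ∀ k ∈ (Finset.Ioc 0 (N ν / 2)).filter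
        (fun k : ℕ => ε * (N ν : ℝ) < (k : ℝ)),
        ((N ν).choose k : ℝ) * Real.exp (-(1 / 2) * I ν * (n - k) * k)
          ≤ Real.exp (-n) := by
      intro k hk
      rw [Finset.mem_filter, Finset.mem_Ioc] at hk
      obtain ⟨⟨hk0, hk2⟩, hkε⟩ := hk
      have hkN : k ≤ N ν := le_trans hk2 (Nat.div_le_self _ _)
      have hkhalf : (k : ℝ) ≤ n / 2 :=
        le_trans (Nat.cast_le.mpr hk2) Nat.cast_div_le
      have hchoose : ((N ν).choose k : ℝ) ≤ 2 ^ (N ν) := by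
        exact_mod_cast Nat.cast_le.mpr (choose_le_two_pow' (N ν) k hkN)
      have hεk : ε * n ≤ (k : ℝ) := le_of_lt hkε
      have hεn0 : (0:ℝ) ≤ ε * n := le_of_lt (mul_pos hε hn0)
      -- exponent bound
      have h3 : (1/2) * I ν * (n/2) * (ε * n) ≤ (1/2) * I ν * (n - k) * k := by
        have hprod : (n/2) * (ε * n) ≤ (n - k) * k :=
          mul_le_mul (by linarith) hεk hεn0 (by linarith)
        have h12 : (0:ℝ) ≤ (1/2) * I ν := by linarith
        calc (1/2) * I ν * (n/2) * (ε * n) = (1/2) * I ν * ((n/2) * (ε * n)) := by ring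
          _ ≤ (1/2) * I ν * ((n - k) * k) := mul_le_mul_of_nonneg_left hprod h12
          _ = (1/2) * I ν * (n - k) * k := by ring
      have h4 : n * (Real.log 2 + 1) ≤ (1/2) * I ν * (n/2) * (ε * n) := by
        have := mul_le_mul_of_nonneg_left hNIν hn0.le
        nlinarith
      have hexp : -(1/2) * I ν * (n - k) * k ≤ -(n * (Real.log 2 + 1)) := by
        nlinarith
      calc ((N ν).choose k : ℝ) * Real.exp (-(1 / 2) * I ν * (n - k) * k)
          ≤ 2 ^ (N ν) * Real.exp (-(n * (Real.log 2 + 1))) :=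
            mul_le_mul hchoose (Real.exp_le_exp.mpr hexp) (Real.exp_pos _).le
              (by positivity)
        _ = Real.exp (-n) := by
            rw [show (2:ℝ) ^ (N ν) = Real.exp (Real.log 2) ^ (N ν) by
                  rw [Real.exp_log (by norm_num)],
              ← Real.exp_nat_mul, ← Real.exp_add]
            congr 1
            ring
    calc (∑ k ∈ (Finset.Ioc 0 (N ν / 2)).filter (fun k : ℕ => ε * (N ν : ℝ) < (k : ℝ)),
            ((N ν).choose k : ℝ) * Real.exp (-(1 / 2) * I ν * (n - k) * k))
        ≤ ∑ k ∈ (Finset.Ioc 0 (N ν / 2)).filter (fun k : ℕ => ε * (N ν : ℝ) < (k : ℝ)),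
            Real.exp (-n) := Finset.sum_le_sum hterm
      _ = ((Finset.Ioc 0 (N ν / 2)).filter
            (fun k : ℕ => ε * (N ν : ℝ) < (k : ℝ))).card * Real.exp (-n) := by
          rw [Finset.sum_const, nsmul_eq_mul]
      _ ≤ n * Real.exp (-n) := by
          apply mul_le_mul_of_nonneg_right _ (Real.exp_pos _).le
          have hcard : ((Finset.Ioc 0 (N ν / 2)).filter
              (fun k : ℕ => ε * (N ν : ℝ) < (k : ℝ))).card ≤ N ν := by
            calc _ ≤ (Finset.Ioc 0 (N ν / 2)).card := Finset.card_filter_le _ _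
              _ = N ν / 2 := by simp
              _ ≤ N ν := Nat.div_le_self _ _
          exact_mod_cast Nat.cast_le.mpr hcard
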